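/- Let k be a field and A a finite-dimensional local symmetric k-algebra. Let X be a bounded cochain complex of nonzero finitely generated projective right A-modules concentrated in degrees a ≤ n ≤ b with X^b ≠ 0, and Y a bounded cochain complex of nonzero finitely generated projective right A-modules concentrated in degrees c ≤ n ≤ d with Y^c ≠ 0, and assume the differentials of both X and Y are radical maps, i.e., the image of each differential d^n is contained in (X^{n+1})·rad(A), respectively (Y^{n+1})·rad(A), where rad(A) is the Jacobson radical of A. Then Hom_{K(A)}(X, Y⟦c−b⟧) ≠ 0; that is, there exists a chain map X → Y⟦c−b⟧ that is not null-homotopic. -/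

import Mathlib

open CategoryTheory Category Limits

universe u

namespace ForPaper

/-- A finite-dimensional algebra is *symmetric* if it admits a linear form `lam` such that
`lam (a * b) = lam (b * a)` for all `a`, `b`, and such that the associated trace bilinear
form `(a, b) ↦ lam (a * b)` is nondegenerate. -/
def IsSymmetricAlgebra (k : Type*) [Field k] (A : Type*) [Ring A] [Algebra k A] : Prop :=
  ∃ lam : A →ₗ[k] k, (∀ a b : A, lam (a * b) = lam (b * a)) ∧
    (∀ a : A, (∀ b : A, lam (a * b) = 0) → a = 0)

end ForPaper

open ForPaper

/-- The quotient functor from complexes to `K(Mod A)`. -/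
noncomputable abbrev Kq (A : Type u) [Ring A] :
    CochainComplex (ModuleCat.{u} A) ℤ ⥤
      HomotopyCategory (ModuleCat.{u} A) (ComplexShape.up ℤ) :=
  HomotopyCategory.quotient _ _

section LocalHelpers

variable {A : Type u} [Ring A] [IsLocalRing A]

/-- In a local ring, an idempotent unit equals `1`. -/
private lemma loc_idem_unit_eq_one {e : A} (he : e * e = e) (h : IsUnit e) : e = 1 := by
  obtain ⟨w, rfl⟩ := h
  have h2 : (↑w⁻¹ : A) * (↑w * ↑w) = ↑w⁻¹ * ↑w := by rw [he]
  rwa [← mul_assoc, w.inv_mul, one_mul] at h2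

/-- In a local ring, one-sided inverses give units. -/
private lemma loc_isUnit_of_mul_eq_one {u v : A} (h : u * v = 1) : IsUnit u := by
  have he : (v * u) * (v * u) = v * u := by
    rw [mul_assoc v u (v * u), ← mul_assoc u v u, h, one_mul]
  rcases IsLocalRing.isUnit_or_isUnit_of_add_one
      (a := v * u) (b := 1 - v * u) (by noncomm_ring) with h1 | h2
  · have hvu : v * u = 1 := loc_idem_unit_eq_one he h1
    exact ⟨⟨u, v, h, hvu⟩, rfl⟩
  · have he2 : ((1 : A) - v * u) * (1 - v * u) = 1 - v * u := by
      have hx : ((1 : A) - v * u) * (1 - v * u)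
          = 1 - v * u - v * u + (v * u) * (v * u) := by noncomm_ring
      rw [hx, he]; noncomm_ring
    have h3 : (1 : A) - v * u = 1 := loc_idem_unit_eq_one he2 h2
    have hvu : v * u = 0 := by
      have := sub_eq_self.mp h3; exact this
    have hv : v = 0 := by
      calc v = v * (u * v) := by rw [h, mul_one]
        _ = (v * u) * v := by rw [mul_assoc]
        _ = 0 := by rw [hvu, zero_mul]
    exfalso
    apply one_ne_zero (α := A)
    rw [← h, hv, mul_zero]

private lemma loc_not_isUnit_mul_right {x : A} (hx : ¬IsUnit x) (a : A) : ¬IsUnit (x * a) := by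
  intro h
  obtain ⟨w, hw⟩ := h
  apply hx
  apply loc_isUnit_of_mul_eq_one (v := a * ↑w⁻¹)
  rw [← mul_assoc, ← hw, w.mul_inv]

private lemma loc_not_isUnit_mul_left {x : A} (hx : ¬IsUnit x) (a : A) : ¬IsUnit (a * x) := by
  intro h
  obtain ⟨w, hw⟩ := h
  have hq : ((↑w⁻¹ : A) * a) * x = 1 := by
    rw [mul_assoc, ← hw, w.inv_mul]
  have hqu : IsUnit ((↑w⁻¹ : A) * a) := loc_isUnit_of_mul_eq_one hq
  obtain ⟨w2, hw2⟩ := hqu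
  apply hx
  have hx_eq : x = ↑w2⁻¹ := by
    calc x = (↑w2⁻¹ * ↑w2) * x := by rw [w2.inv_mul, one_mul]
      _ = ↑w2⁻¹ * ((↑w⁻¹ * a) * x) := by rw [mul_assoc, hw2]
      _ = ↑w2⁻¹ := by rw [hq, mul_one]
  rw [hx_eq]
  exact (w2⁻¹).isUnit

/-- The set of nonunits of a (possibly noncommutative) local ring, as a left ideal. -/
private def locMaxIdl (A : Type u) [Ring A] [IsLocalRing A] : Ideal A where
  carrier := {x | ¬IsUnit x}
  zero_mem' := not_isUnit_zero
  add_mem' := by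
    intro x y hx hy hu
    obtain ⟨w, hw⟩ := hu
    have h1 : x * ↑w⁻¹ + y * ↑w⁻¹ = 1 := by
      rw [← add_mul, ← hw, w.mul_inv]
    rcases IsLocalRing.isUnit_or_isUnit_of_add_one h1 with h | h
    · exact loc_not_isUnit_mul_right hx _ h
    · exact loc_not_isUnit_mul_right hy _ h
  smul_mem' := by
    intro a x hx
    simpa [smul_eq_mul] using loc_not_isUnit_mul_left hx a

private lemma loc_mem_locMaxIdl_iff {x : A} : x ∈ locMaxIdl A ↔ ¬IsUnit x := Iff.rfl

private lemma locMaxIdl_isMaximal : (locMaxIdl A).IsMaximal := by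
  constructor
  constructor
  · intro h
    have h1 : (1 : A) ∈ locMaxIdl A := h ▸ Submodule.mem_top
    exact h1 isUnit_one
  · intro b hb
    obtain ⟨x, hxb, hx⟩ := SetLike.exists_of_lt hb
    exact Ideal.eq_top_of_isUnit_mem b hxb (not_not.mp hx)

private lemma loc_jacobson_bot_eq : (⊥ : Ideal A).jacobson = locMaxIdl A := by
  apply le_antisymm
  · exact sInf_le ⟨bot_le, locMaxIdl_isMaximal⟩
  · intro x hx
    rw [Ideal.jacobson, Submodule.mem_sInf]
    intro m hm
    have hle : m ≤ locMaxIdl A := by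
      intro y hy
      intro hyu
      exact hm.2.ne_top (Ideal.eq_top_of_isUnit_mem m hy hyu)
    have heq : m = locMaxIdl A := by
      by_contra hne
      have hlt : m < locMaxIdl A := lt_of_le_of_ne hle hne
      have := hm.2.1.2 _ hlt
      exact locMaxIdl_isMaximal.1.1 this
    rw [heq]
    exact hx

private lemma loc_mem_jacobson_iff {x : A} :
    x ∈ (⊥ : Ideal A).jacobson ↔ ¬IsUnit x := by
  rw [loc_jacobson_bot_eq]; exact Iff.rfl

private lemma loc_jac_mul_mem {x : A} (hx : x ∈ (⊥ : Ideal A).jacobson) (a : A) :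
    x * a ∈ (⊥ : Ideal A).jacobson :=
  loc_mem_jacobson_iff.mpr (loc_not_isUnit_mul_right (loc_mem_jacobson_iff.mp hx) a)

/-- Writing an element of `J • span t` as a `J`-linear combination of `t`. -/
private lemma loc_mem_jac_smul_span_finset {M : Type u} [AddCommGroup M] [Module A M]
    (t : Finset M) (x : M)
    (hx : x ∈ (⊥ : Ideal A).jacobson • Submodule.span A (t : Set M)) :
    ∃ c : M → A, (∀ y, c y ∈ (⊥ : Ideal A).jacobson) ∧ x = ∑ y ∈ t, c y • y := by
  refine Submodule.smul_induction_on hx ?_ ?_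
  · intro r hr v hv
    obtain ⟨g, -, hg⟩ := Submodule.mem_span_finset.mp hv
    refine ⟨fun y => r * g y, fun y => loc_jac_mul_mem hr _, ?_⟩
    rw [← hg, Finset.smul_sum]
    exact Finset.sum_congr rfl fun y _ => by rw [smul_smul]
  · rintro x y ⟨cx, hcx, rfl⟩ ⟨cy, hcy, rfl⟩
    exact ⟨fun z => cx z + cy z, fun z => Ideal.add_mem _ (hcx z) (hcy z),
      by rw [← Finset.sum_add_distrib]; exact Finset.sum_congr rfl fun z _ => (add_smul _ _ _).symm⟩

/-- Nakayama's lemma over a (possibly noncommutative) local ring. -/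
private lemma loc_nakayama_aux {M : Type u} [AddCommGroup M] [Module A M] :
    ∀ (n : ℕ) (t : Finset M), t.card = n →
      Submodule.span A (t : Set M) ≤
        (⊥ : Ideal A).jacobson • Submodule.span A (t : Set M) →
      Submodule.span A (t : Set M) = ⊥ := by
  classical
  intro n
  induction n with
  | zero =>
    intro t ht _
    rw [Finset.card_eq_zero] at ht
    subst ht
    simp
  | succ n ih =>
    intro t ht hle
    obtain ⟨x, hx⟩ := Finset.card_pos.mp (by rw [ht]; exact n.succ_pos)
    have hxJ : x ∈ (⊥ : Ideal A).jacobson • Submodule.span A (t : Set M) :=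
      hle (Submodule.subset_span hx)
    obtain ⟨cf, hcf, hsum⟩ := loc_mem_jac_smul_span_finset t x hxJ
    have key : x - cf x • x = ∑ y ∈ t.erase x, cf y • y := by
      have hsplit := Finset.sum_erase_add t (fun y => cf y • y) hx
      rw [sub_eq_iff_eq_add, hsplit]
      exact hsum
    have hunit : IsUnit ((1 : A) - cf x) := by
      rcases IsLocalRing.isUnit_or_isUnit_of_add_one
          (a := cf x) (b := 1 - cf x) (by noncomm_ring) with h | h
      · exact absurd h (loc_mem_jacobson_iff.mp (hcf x))
      · exact h
    obtain ⟨u, hu⟩ := hunit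
    have hxmem : x ∈ Submodule.span A ((t.erase x : Finset M) : Set M) := by
      have h3 : (↑u : A) • x = ∑ y ∈ t.erase x, cf y • y := by
        rw [hu, sub_smul, one_smul]; exact key
      have h4 : x = (↑u⁻¹ : A) • (∑ y ∈ t.erase x, cf y • y) := by
        rw [← h3, smul_smul, u.inv_mul, one_smul]
      have h5 : (↑u⁻¹ : A) • (∑ y ∈ t.erase x, cf y • y) ∈
          Submodule.span A ((t.erase x : Finset M) : Set M) :=
        Submodule.smul_mem _ _ (Submodule.sum_mem _ fun y hy =>
          Submodule.smul_mem _ _ (Submodule.subset_span hy))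
      rwa [← h4] at h5
    have hspan : Submodule.span A (t : Set M)
        = Submodule.span A ((t.erase x : Finset M) : Set M) := by
      apply le_antisymm
      · rw [Submodule.span_le]
        intro y hy
        by_cases hyx : y = x
        · subst hyx; exact hxmem
        · exact Submodule.subset_span (Finset.mem_erase.mpr ⟨hyx, hy⟩)
      · exact Submodule.span_mono (Finset.erase_subset x t)
    have hle' : Submodule.span A ((t.erase x : Finset M) : Set M) ≤
        (⊥ : Ideal A).jacobson • Submodule.span A ((t.erase x : Finset M) : Set M) := by
      have := hle
      rw [hspan] at this
      exact this
    rw [hspan]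
    exact ih (t.erase x) (by rw [Finset.card_erase_of_mem hx]; omega) hle'

private lemma loc_nakayama {M : Type u} [AddCommGroup M] [Module A M]
    (N : Submodule A M) (hfg : N.FG)
    (hle : N ≤ (⊥ : Ideal A).jacobson • N) : N = ⊥ := by
  obtain ⟨t, rfl⟩ := hfg
  exact loc_nakayama_aux t.card t rfl hle

/-- Over a local ring, a nonzero finitely generated projective module admits a linear
functional taking a unit value. -/
private lemma loc_exists_unit_coord (M : Type u) [AddCommGroup M] [Module A M]
    [Module.Finite A M] [Module.Projective A M] [Nontrivial M] :
    ∃ (p : M →ₗ[A] A) (x : M), IsUnit (p x) := by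
  by_contra hcon
  push_neg at hcon
  have hJ : ∀ (p : M →ₗ[A] A) (x : M), p x ∈ (⊥ : Ideal A).jacobson := fun p x =>
    loc_mem_jacobson_iff.mpr (hcon p x)
  obtain ⟨sec, hsec⟩ := Module.Projective.out (R := A) (P := M)
  have htop : (⊤ : Submodule A M) ≤ (⊥ : Ideal A).jacobson • (⊤ : Submodule A M) := by
    intro x _
    have hx : x = (sec x).sum fun m r => r • m := by
      conv_lhs => rw [← hsec x]
      rw [Finsupp.linearCombination_apply]
      rfl
    rw [hx]
    refine Submodule.sum_mem _ fun m _ => ?_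
    have hcoef : (sec x) m ∈ (⊥ : Ideal A).jacobson := hJ ((Finsupp.lapply m).comp sec) x
    exact Submodule.smul_mem_smul hcoef Submodule.mem_top
  have hbot : (⊤ : Submodule A M) = ⊥ :=
    loc_nakayama ⊤ (Module.finite_def.mp inferInstance) htop
  obtain ⟨x, y, hxy⟩ := exists_pair_ne M
  apply hxy
  have hxm : x ∈ (⊥ : Submodule A M) := hbot ▸ Submodule.mem_top
  have hym : y ∈ (⊥ : Submodule A M) := hbot ▸ Submodule.mem_top
  rw [Submodule.mem_bot] at hxm hym
  rw [hxm, hym]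

/-- A nonzero two-sided "socle" element in a finite-dimensional local algebra. -/
private lemma loc_exists_socle (k : Type u) [Field k] [Algebra k A]
    [FiniteDimensional k A] :
    ∃ s : A, s ≠ 0 ∧ (∀ j ∈ (⊥ : Ideal A).jacobson, j * s = 0) ∧
      (∀ j ∈ (⊥ : Ideal A).jacobson, s * j = 0) := by
  classical
  set J : Ideal A := (⊥ : Ideal A).jacobson with hJdef
  let E : ℕ → Ideal A := fun n => (fun N => J • N)^[n] ⊤
  have hE_succ : ∀ n, E (n + 1) = J • E n := fun n => Function.iterate_succ_apply' _ _ _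
  have hE_le : ∀ n, E (n + 1) ≤ E n := by
    intro n
    rw [hE_succ]
    exact Submodule.smul_le.mpr fun r _ m hm => (E n).smul_mem r hm
  -- stabilization of the chain, via `k`-dimensions
  let g : ℕ → ℕ := fun n => Module.finrank k (Submodule.restrictScalars k (E n))
  have hg : ∀ n, g (n + 1) ≤ g n := fun n =>
    Submodule.finrank_mono (fun x hx => hE_le n hx)
  have hstab : ∃ n, g (n + 1) = g n := by
    by_contra hc
    push_neg at hc
    have hlt : ∀ n, g (n + 1) < g n := fun n => lt_of_le_of_ne (hg n) (hc n)
    have hsum : ∀ n, g n + n ≤ g 0 := by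
      intro n
      induction n with
      | zero => omega
      | succ m ihm => have := hlt m; omega
    have := hsum (g 0 + 1)
    omega
  obtain ⟨n, hn⟩ := hstab
  have hEeq : E (n + 1) = E n := by
    have hle' : Submodule.restrictScalars k (E (n + 1)) ≤
        Submodule.restrictScalars k (E n) := fun x hx => hE_le n hx
    have heq := Submodule.eq_of_le_of_finrank_le hle' (le_of_eq hn.symm)
    exact Submodule.restrictScalars_injective k A A heq
  haveI : IsNoetherian A A := isNoetherian_of_tower k inferInstance
  have hEbot : E n = ⊥ := by
    refine loc_nakayama (E n) (IsNoetherian.noetherian _) ?_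
    rw [← hE_succ n, hEeq]
  -- powers of the Jacobson radical as a `k`-submodule
  let Jk : Submodule k A := Submodule.restrictScalars k J
  have hpow : ∀ m, (Jk ^ m : Submodule k A) ≤ Submodule.restrictScalars k (E m) := by
    intro m
    induction m with
    | zero =>
      rw [pow_zero]
      intro x _
      show x ∈ E 0
      exact Submodule.mem_top
    | succ m ihm =>
      rw [pow_succ']
      refine Submodule.mul_le.mpr fun r hr y hy => ?_
      have hmem : r • y ∈ J • E m := Submodule.smul_mem_smul hr (ihm hy)
      show r * y ∈ E (m + 1)
      rw [hE_succ m]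
      exact hmem
  have hJkbot : (Jk ^ n : Submodule k A) = ⊥ := by
    refine le_bot_iff.mp ?_
    intro x hx
    have := hpow n hx
    rw [hEbot] at this
    exact this
  have hex : ∃ m, (Jk ^ m : Submodule k A) = ⊥ := ⟨n, hJkbot⟩
  have hfind0 : Nat.find hex ≠ 0 := by
    intro h
    have hspec := Nat.find_spec hex
    rw [h, pow_zero] at hspec
    have h1 : (1 : A) ∈ (1 : Submodule k A) := Submodule.one_le.mp le_rfl
    rw [hspec] at h1
    exact one_ne_zero ((Submodule.mem_bot k).mp h1)
  have hne : (Jk ^ (Nat.find hex - 1) : Submodule k A) ≠ ⊥ :=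
    Nat.find_min hex (by omega)
  obtain ⟨s, hs_mem, hs0⟩ := (Submodule.ne_bot_iff _).mp hne
  have hsucc : Nat.find hex - 1 + 1 = Nat.find hex := by omega
  refine ⟨s, hs0, ?_, ?_⟩
  · intro j hj
    have h1 : j * s ∈ Jk * Jk ^ (Nat.find hex - 1) := Submodule.mul_mem_mul hj hs_mem
    rw [← pow_succ', hsucc, Nat.find_spec hex] at h1
    exact (Submodule.mem_bot k).mp h1
  · intro j hj
    have h1 : s * j ∈ Jk ^ (Nat.find hex - 1) * Jk := Submodule.mul_mem_mul hs_mem hj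
    rw [← pow_succ, hsucc, Nat.find_spec hex] at h1
    exact (Submodule.mem_bot k).mp h1

end LocalHelpers

private lemma d_eqToHom {ι : Type*} {V : Type*} [Category V]
    [Limits.HasZeroMorphisms V] {cs : ComplexShape ι} (K : HomologicalComplex V cs)
    {i j j' : ι} (h : j = j') :
    K.d i j' = K.d i j ≫ eqToHom (congrArg K.X h) := by
  subst h; simp

/-- Over a finite-dimensional local symmetric algebra, if `X` is a bounded complex of
nonzero finitely generated projectives concentrated in degrees `a ≤ n ≤ b` and `Y` one
concentrated in degrees `c ≤ n ≤ d`, both with radical differentials, then there is a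
non-null-homotopic chain map `X ⟶ Y⟦c - b⟧`. -/
theorem statement_13 (k : Type u) [Field k] (A : Type u) [Ring A] [Algebra k A]
    [FiniteDimensional k A] [IsLocalRing A] (hA : IsSymmetricAlgebra k A)
    (X Y : CochainComplex (ModuleCat.{u} A) ℤ) (a b c d : ℤ) (hab : a ≤ b) (hcd : c ≤ d)
    (hX : ∀ n : ℤ, a ≤ n → n ≤ b →
      Module.Finite A (X.X n) ∧ Module.Projective A (X.X n) ∧ Nontrivial (X.X n))
    (hX0 : ∀ n : ℤ, (n < a ∨ b < n) → IsZero (X.X n))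
    (hY : ∀ n : ℤ, c ≤ n → n ≤ d →
      Module.Finite A (Y.X n) ∧ Module.Projective A (Y.X n) ∧ Nontrivial (Y.X n))
    (hY0 : ∀ n : ℤ, (n < c ∨ d < n) → IsZero (Y.X n))
    (hXrad : ∀ n : ℤ, LinearMap.range (X.d n (n + 1)).hom ≤
      ((⊥ : Ideal A).jacobson) • (⊤ : Submodule A (X.X (n + 1))))
    (hYrad : ∀ n : ℤ, LinearMap.range (Y.d n (n + 1)).hom ≤
      ((⊥ : Ideal A).jacobson) • (⊤ : Submodule A (Y.X (n + 1)))) :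
    ∃ φ : (Kq A).obj X ⟶ (Kq A).obj (Y⟦(c - b)⟧), φ ≠ 0 := by
  classical
  -- the target degree of `Y`
  set c' : ℤ := b + (c - b) with hc'def
  obtain ⟨finX, projX, ntX⟩ := hX b hab le_rfl
  obtain ⟨finY, projY, ntY⟩ := hY c' (by omega) (by omega)
  obtain ⟨s, hs0, hJs, hsJ⟩ := loc_exists_socle (A := A) k
  obtain ⟨p, x₀, hpx₀⟩ := loc_exists_unit_coord (A := A) (X.X b)
  obtain ⟨q, y₁, hqy₁⟩ := loc_exists_unit_coord (A := A) (Y.X c')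
  have hsy : s • y₁ ≠ 0 := by
    intro h
    obtain ⟨u, hu⟩ := hqy₁
    apply hs0
    have h1 : s * q y₁ = 0 := by
      have h2 := congrArg q h
      rwa [map_smul, map_zero, smul_eq_mul] at h2
    calc s = s * (q y₁ * ↑u⁻¹) := by rw [← hu, u.mul_inv, mul_one]
      _ = (s * q y₁) * ↑u⁻¹ := by rw [mul_assoc]
      _ = 0 := by rw [h1, zero_mul]
  set w : (Y.X c' : Type u) := s • y₁ with hwdef
  have hjw : ∀ j ∈ (⊥ : Ideal A).jacobson, j • w = 0 := by
    intro j hj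
    rw [hwdef, smul_smul, hJs j hj, zero_smul]
  let ψ : (X.X b : Type u) →ₗ[A] (Y.X c' : Type u) :=
    { toFun := fun x => p x • w
      map_add' := fun x y => by
        show p (x + y) • w = p x • w + p y • w
        rw [map_add, add_smul]
      map_smul' := fun r x => by
        show p (r • x) • w = r • (p x • w)
        rw [map_smul, smul_eq_mul, mul_smul] }
  have hK1 : ∀ v ∈ (⊥ : Ideal A).jacobson • (⊤ : Submodule A (X.X b)), ψ v = 0 := by
    intro v hv
    refine Submodule.smul_induction_on hv ?_ ?_
    · intro r hr m _
      show p (r • m) • w = 0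
      rw [map_smul, smul_eq_mul]
      exact hjw _ (loc_jac_mul_mem hr _)
    · intro v₁ v₂ h1 h2
      rw [map_add, h1, h2, add_zero]
  have hK2 : ∀ x : (X.X b : Type u), (Y.d c' (c' + 1)) (ψ x) = 0 := by
    intro x
    have h1 : (Y.d c' (c' + 1)) (ψ x) = (p x * s) • ((Y.d c' (c' + 1)) y₁) := by
      show (Y.d c' (c' + 1)) (p x • (s • y₁)) = _
      rw [map_smul, map_smul, smul_smul]
    rw [h1]
    have h2 : (Y.d c' (c' + 1)) y₁ ∈
        (⊥ : Ideal A).jacobson • (⊤ : Submodule A (Y.X (c' + 1))) :=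
      hYrad c' ⟨y₁, rfl⟩
    have h3 : ∀ v ∈ (⊥ : Ideal A).jacobson • (⊤ : Submodule A (Y.X (c' + 1))),
        (p x * s) • v = 0 := by
      intro v hv
      refine Submodule.smul_induction_on hv ?_ ?_
      · intro r hr z _
        rw [smul_smul, mul_assoc, hsJ r hr, mul_zero, zero_smul]
      · intro v₁ v₂ hv₁ hv₂
        rw [smul_add, hv₁, hv₂, add_zero]
    exact h3 _ h2
  have hψx₀ : ψ x₀ ≠ 0 := by
    intro h
    obtain ⟨u, hu⟩ := hpx₀
    apply hsy
    calc s • y₁ = w := rfl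
      _ = ((↑u⁻¹ : A) * p x₀) • w := by rw [← hu, u.inv_mul, one_smul]
      _ = (↑u⁻¹ : A) • (p x₀ • w) := by rw [mul_smul]
      _ = (↑u⁻¹ : A) • ψ x₀ := rfl
      _ = 0 := by rw [h, smul_zero]
  -- the chain map
  let Z : CochainComplex (ModuleCat.{u} A) ℤ := Y⟦(c - b)⟧
  let ψA : X.X b ⟶ Z.X b := ModuleCat.ofHom ψ
  have hrange : ∀ x : (X.X (b - 1) : Type u),
      (X.d (b - 1) b) x ∈ (⊥ : Ideal A).jacobson • (⊤ : Submodule A (X.X b)) := by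
    intro x
    have h1 := hXrad (b - 1)
    have h2 : (b - 1 : ℤ) + 1 = b := by omega
    rw [h2] at h1
    exact h1 ⟨x, rfl⟩
  let f : X ⟶ Z :=
    { f := fun n =>
        if h : n = b then
          eqToHom (congrArg X.X h) ≫ ψA ≫ eqToHom (congrArg Z.X h.symm)
        else 0
      comm' := by
        intro i j hij
        have hij' : i + 1 = j := hij
        by_cases hi : b = i
        · subst hi
          subst hij'
          rw [dif_pos rfl, dif_neg (by omega : (b + 1 : ℤ) ≠ b)]
          rw [comp_zero]
          simp only [eqToHom_refl, comp_id, id_comp]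
          -- goal : ψA ≫ Z.d b (b + 1) = 0
          have he : c' + 1 = b + 1 + (c - b) := by omega
          have hZd : Z.d b (b + 1) =
              (c - b).negOnePow • (Y.d c' (b + 1 + (c - b))) := rfl
          have hd2 : Y.d c' (b + 1 + (c - b)) =
              Y.d c' (c' + 1) ≫ eqToHom (congrArg Y.X he) := d_eqToHom Y he
          rw [hZd, hd2]
          erw [Linear.comp_units_smul]
          have h0 : ψA ≫ Y.d c' (c' + 1) = 0 := by
            apply ModuleCat.hom_ext
            apply LinearMap.ext
            intro x
            exact hK2 x
          erw [← Category.assoc, h0, zero_comp, smul_zero]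
        · by_cases hj : b = j
          · subst hj
            rw [dif_pos rfl, dif_neg (fun h => hi h.symm), zero_comp]
            simp only [eqToHom_refl, comp_id, id_comp]
            -- goal : 0 = X.d i b ≫ ψA
            have hib : i = b - 1 := by omega
            subst hib
            symm
            apply ModuleCat.hom_ext
            apply LinearMap.ext
            intro x
            exact hK1 _ (hrange x)
          · rw [dif_neg (fun h => hi h.symm), dif_neg (fun h => hj h.symm), zero_comp, comp_zero] }
  refine ⟨(Kq A).map f, ?_⟩
  intro h0
  have heq : (Kq A).map f = (Kq A).map 0 := by
    rw [h0, Functor.map_zero]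
  have H : Homotopy f 0 := HomotopyCategory.homotopyOfEq _ _ heq
  have hcomm := H.comm b
  have h1 : dNext b H.hom = X.d b (b + 1) ≫ H.hom (b + 1) b :=
    dNext_eq _ (show (ComplexShape.up ℤ).Rel b (b + 1) from rfl)
  have hd0 : X.d b (b + 1) = 0 :=
    (hX0 (b + 1) (Or.inr (by omega))).eq_of_tgt _ 0
  have h2 : prevD b H.hom = H.hom b (b - 1) ≫ Z.d (b - 1) b :=
    prevD_eq _ (show (ComplexShape.up ℤ).Rel (b - 1) b by
      show (b - 1 : ℤ) + 1 = b; omega)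
  have hh0 : H.hom b (b - 1) = 0 := by
    have hzero : IsZero (Z.X (b - 1)) := hY0 ((b - 1) + (c - b)) (Or.inl (by omega))
    exact hzero.eq_of_tgt _ 0
  rw [h1, hd0, zero_comp, h2, hh0, zero_comp] at hcomm
  have hfb : f.f b = 0 := by
    simpa using hcomm
  apply hψx₀
  have hfb' : (f.f b) x₀ = 0 := by rw [hfb]; rfl
  have hfbψ : (f.f b) x₀ = ψ x₀ := by
    show (if h : b = b then
        eqToHom (congrArg X.X h) ≫ ψA ≫ eqToHom (congrArg Z.X h.symm)
      else 0) x₀ = ψ x₀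
    rw [dif_pos rfl]
    simp only [eqToHom_refl, comp_id, id_comp]
    rfl
  rw [← hfbψ, hfb']
  rfl
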